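/- If two weight sequences M and L are equivalent (M ≈ L), then their growth indices coincide: ω(M) = ω(L), where ω(M) := liminf_{p→∞} log(m_p)/log(p). -/

import Mathlib

open Filter

private lemma ereal_le_of_forall {x y : EReal} (h : ∀ c : ℝ, (c:EReal) < x → (c:EReal) ≤ y) : x ≤ y := by
  by_contra hc
  push_neg at hc
  obtain ⟨c, h1, h2⟩ := EReal.exists_between_coe_real hc
  exact absurd (h c h2) (not_le.2 h1)

private lemma log_eq_sum (M : ℕ → ℝ) (hMpos : ∀ p, 0 < M p) (hM0 : M 0 = 1) (p : ℕ) :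
    Real.log (M p) = ∑ j ∈ Finset.range p, Real.log (M (j+1) / M j) := by
  induction p with
  | zero => simp [hM0]
  | succ p ih =>
    rw [Finset.sum_range_succ, ← ih, Real.log_div (hMpos _).ne' (hMpos _).ne']
    ring

private lemma sum_log_ge (p : ℕ) :
    (p:ℝ) * Real.log p - p ≤ ∑ j ∈ Finset.range p, Real.log ((j:ℝ)+1) := by
  induction p with
  | zero => simp
  | succ p ih =>
    rw [Finset.sum_range_succ]
    have h1 : (p:ℝ) * Real.log ((p:ℝ)+1) - (p:ℝ) * Real.log p ≤ 1 := by
      rcases Nat.eq_zero_or_pos p with h|h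
      · simp [h]
      · have hp : (0:ℝ) < p := by exact_mod_cast h
        have hlog := Real.log_le_sub_one_of_pos (show (0:ℝ) < ((p:ℝ)+1)/p by positivity)
        rw [Real.log_div (by positivity) (by positivity)] at hlog
        have h2 : Real.log ((p:ℝ)+1) - Real.log p ≤ 1/p := by
          have h3 : ((p:ℝ)+1)/p - 1 = 1/p := by field_simp; ring
          linarith [h3 ▸ hlog]
        calc (p:ℝ) * Real.log ((p:ℝ)+1) - (p:ℝ) * Real.log p
            = (p:ℝ) * (Real.log ((p:ℝ)+1) - Real.log p) := by ring
          _ ≤ (p:ℝ) * (1/p) := mul_le_mul_of_nonneg_left h2 hp.le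
          _ = 1 := by field_simp
    push_cast
    linarith

private lemma sum_log_ge' (p : ℕ) :
    (p:ℝ) * Real.log p - p - Real.log p ≤ ∑ j ∈ Finset.range p, Real.log (j:ℝ) := by
  have h1 : ∑ j ∈ Finset.range (p+1), Real.log (j:ℝ)
      = ∑ j ∈ Finset.range p, Real.log ((j:ℝ)+1) + Real.log (0:ℝ) := by
    rw [Finset.sum_range_succ' (fun j => Real.log (j:ℝ)) p]
    push_cast
    rfl
  have h2 : ∑ j ∈ Finset.range (p+1), Real.log (j:ℝ)
      = ∑ j ∈ Finset.range p, Real.log (j:ℝ) + Real.log (p:ℝ) := Finset.sum_range_succ _ p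
  have := sum_log_ge p
  rw [Real.log_zero] at h1
  linarith

private lemma key (M : ℕ → ℝ) (hMpos : ∀ p, 0 < M p) (hM0 : M 0 = 1)
    (hMmono : Monotone fun p => M (p + 1) / M p)
    (hMquot : Tendsto (fun p => M (p + 1) / M p) atTop atTop) :
    liminf (fun p : ℕ => ((Real.log (M (p + 1) / M p) / Real.log p : ℝ) : EReal)) atTop
      = liminf (fun p : ℕ => ((Real.log (M p) / ((p:ℝ) * Real.log p) : ℝ) : EReal)) atTop := by
  set f : ℕ → ℝ := fun p => Real.log (M (p + 1) / M p) with hf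
  have fmono : Monotone f := fun a b hab =>
    Real.log_le_log (div_pos (hMpos _) (hMpos _)) (hMmono hab)
  have hlogN : Tendsto (fun p : ℕ => Real.log p) atTop atTop :=
    Real.tendsto_log_atTop.comp tendsto_natCast_atTop_atTop
  have hplog : Tendsto (fun p : ℕ => (p:ℝ) * Real.log p) atTop atTop :=
    Tendsto.atTop_mul_atTop₀ tendsto_natCast_atTop_atTop hlogN
  obtain ⟨N₀, hN₀⟩ := eventually_atTop.1 (hMquot.eventually_ge_atTop 1)
  apply le_antisymm
  · -- liminf f' ≤ liminf g
    apply ereal_le_of_forall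
    intro c hc
    rcases lt_or_ge c 0 with hc0 | hc0
    · have ht : Tendsto (fun p : ℕ => f 0 / Real.log p) atTop (nhds 0) :=
        tendsto_const_nhds.div_atTop hlogN
      have h2 : ∀ᶠ p : ℕ in atTop, c < f 0 / Real.log p := ht.eventually (eventually_gt_nhds hc0)
      have hev : ∀ᶠ p in atTop, (c:EReal) ≤ ((Real.log (M p) / ((p:ℝ) * Real.log p) : ℝ) : EReal) := by
        filter_upwards [h2, eventually_ge_atTop 2] with p h2p hp2
        rw [EReal.coe_le_coe_iff]
        have hp2R : (2:ℝ) ≤ (p:ℝ) := by exact_mod_cast hp2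
        have hlogp : 0 < Real.log p := Real.log_pos (by linarith)
        have hpR : (0:ℝ) < p := by linarith
        have hden : (0:ℝ) < (p:ℝ) * Real.log p := mul_pos hpR hlogp
        have hsum : (p:ℝ) * f 0 ≤ Real.log (M p) := by
          rw [log_eq_sum M hMpos hM0 p]
          have := Finset.card_nsmul_le_sum (Finset.range p) f (f 0)
            (fun j _ => fmono (Nat.zero_le j))
          rw [Finset.card_range, nsmul_eq_mul] at this
          exact this
        have h4 : ((p:ℝ) * f 0) / ((p:ℝ) * Real.log p) ≤ Real.log (M p) / ((p:ℝ) * Real.log p) :=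
          div_le_div_of_nonneg_right hsum hden.le
        rw [mul_div_mul_left _ _ hpR.ne'] at h4
        linarith
      exact le_liminf_of_le (by isBoundedDefault) hev
    · have hev := eventually_lt_of_lt_liminf hc
      obtain ⟨N₁, hN₁⟩ := eventually_atTop.1 hev
      set N := max N₁ 2 with hN
      set T : ℝ := ∑ j ∈ Finset.range N, f j with hT
      set S : ℝ := ∑ j ∈ Finset.range N, Real.log (j:ℝ) with hS
      set r : ℕ → ℝ := fun p => (T - c*S)/((p:ℝ) * Real.log p) - c/Real.log p - c/(p:ℝ) with hr
      have hrt : Tendsto (fun p : ℕ => c + r p) atTop (nhds c) := by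
        have t1 : Tendsto (fun p : ℕ => (T - c*S) / ((p:ℝ) * Real.log p)) atTop (nhds 0) :=
          tendsto_const_nhds.div_atTop hplog
        have t2 : Tendsto (fun p : ℕ => c / Real.log (p:ℝ)) atTop (nhds 0) :=
          tendsto_const_nhds.div_atTop hlogN
        have t3 : Tendsto (fun p : ℕ => c / (p:ℝ)) atTop (nhds 0) :=
          tendsto_const_nhds.div_atTop tendsto_natCast_atTop_atTop
        have h1 : Tendsto r atTop (nhds 0) := by
          have := (t1.sub t2).sub t3
          simpa using this
        simpa using tendsto_const_nhds.add h1
      have hevg : ∀ᶠ p in atTop, ((c + r p : ℝ) : EReal) ≤ ((Real.log (M p) / ((p:ℝ) * Real.log p) : ℝ) : EReal) := by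
        filter_upwards [eventually_ge_atTop (N+1)] with p hp
        rw [EReal.coe_le_coe_iff]
        have hNp : N ≤ p := le_trans (Nat.le_succ N) hp
        have hp2 : (2:ℕ) ≤ p := le_trans (le_max_right _ _) hNp
        have hp2R : (2:ℝ) ≤ (p:ℝ) := by exact_mod_cast hp2
        have hlogp : 0 < Real.log p := Real.log_pos (by linarith)
        have hpR : (0:ℝ) < p := by linarith
        have hden : (0:ℝ) < (p:ℝ) * Real.log p := mul_pos hpR hlogp
        have hsplit : Real.log (M p) = T + ∑ j ∈ Finset.Ico N p, f j := by
          rw [log_eq_sum M hMpos hM0 p, hT, Finset.range_eq_Ico, Finset.range_eq_Ico]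
          exact (Finset.sum_Ico_consecutive f (Nat.zero_le N) hNp).symm
        have hterm : ∀ j ∈ Finset.Ico N p, c * Real.log j ≤ f j := by
          intro j hj
          obtain ⟨hj1, _⟩ := Finset.mem_Ico.1 hj
          have hj2 : (2:ℕ) ≤ j := le_trans (le_max_right _ _) hj1
          have hlogj : 0 < Real.log j := Real.log_pos (by exact_mod_cast hj2)
          have := hN₁ j (le_trans (le_max_left _ _) hj1)
          rw [EReal.coe_lt_coe_iff, lt_div_iff₀ hlogj] at this
          exact this.le
        have hs1 : c * ∑ j ∈ Finset.Ico N p, Real.log (j:ℝ) ≤ ∑ j ∈ Finset.Ico N p, f j := by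
          rw [Finset.mul_sum]
          exact Finset.sum_le_sum hterm
        have hs2 : ∑ j ∈ Finset.Ico N p, Real.log (j:ℝ)
            = ∑ j ∈ Finset.range p, Real.log (j:ℝ) - S := by
          rw [hS, Finset.range_eq_Ico, Finset.range_eq_Ico]
          have := Finset.sum_Ico_consecutive (fun j : ℕ => Real.log (j:ℝ))
            (Nat.zero_le N) hNp
          linarith
        have hs3 := sum_log_ge' p
        have hs4 : c * ((p:ℝ) * Real.log p - p - Real.log p - S)
            ≤ c * ∑ j ∈ Finset.Ico N p, Real.log (j:ℝ) := by
          apply mul_le_mul_of_nonneg_left _ hc0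
          rw [hs2]; linarith
        have hMlb : c * ((p:ℝ) * Real.log p) + (T - c*S) - c*p - c*Real.log p ≤ Real.log (M p) := by
          have hexpand : c * ((p:ℝ) * Real.log p - p - Real.log p - S)
              = c * ((p:ℝ) * Real.log p) - c*p - c*Real.log p - c*S := by ring
          rw [hexpand] at hs4
          linarith
        rw [le_div_iff₀ hden]
        have heq2 : (c + r p) * ((p:ℝ) * Real.log p)
            = c * ((p:ℝ) * Real.log p) + (T - c*S) - c*p - c*Real.log p := by
          simp only [hr]
          field_simp
          ring
        rw [heq2]
        exact hMlb
      calc (c:EReal) = liminf (fun p : ℕ => ((c + r p : ℝ) : EReal)) atTop := by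
            refine (Tendsto.liminf_eq ?_).symm
            exact EReal.tendsto_coe.2 hrt
        _ ≤ _ := liminf_le_liminf hevg
  · -- liminf g ≤ liminf f'
    rw [← liminf_nat_add (fun p : ℕ => ((Real.log (M p) / ((p:ℝ) * Real.log p) : ℝ) : EReal)) 1]
    have hev : ∀ᶠ p in atTop,
        ((Real.log (M (p+1)) / ((((p:ℕ)+1 : ℕ):ℝ) * Real.log (((p:ℕ)+1 : ℕ):ℝ)) : ℝ) : EReal)
          ≤ ((Real.log (M (p + 1) / M p) / Real.log p : ℝ) : EReal) := by
      filter_upwards [eventually_ge_atTop (max N₀ 2)] with p hp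
      have hp0 : N₀ ≤ p := le_trans (le_max_left _ _) hp
      have hp2 : (2:ℕ) ≤ p := le_trans (le_max_right _ _) hp
      have hp2R : (2:ℝ) ≤ (p:ℝ) := by exact_mod_cast hp2
      have hlogp : 0 < Real.log p := Real.log_pos (by linarith)
      have hlogp1 : 0 < Real.log ((p:ℝ)+1) := Real.log_pos (by linarith)
      have hfp : 0 ≤ f p := Real.log_nonneg (hN₀ p hp0)
      rw [EReal.coe_le_coe_iff]
      push_cast
      have hsum : Real.log (M (p+1)) ≤ ((p:ℝ)+1) * f p := by
        rw [log_eq_sum M hMpos hM0 (p+1)]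
        have := Finset.sum_le_card_nsmul (Finset.range (p+1)) f (f p)
          (fun j hj => fmono (Nat.le_of_lt_succ (Finset.mem_range.1 hj)))
        rw [Finset.card_range, nsmul_eq_mul] at this
        push_cast at this
        exact this
      calc Real.log (M (p+1)) / (((p:ℝ)+1) * Real.log ((p:ℝ)+1))
          ≤ (((p:ℝ)+1) * f p) / (((p:ℝ)+1) * Real.log ((p:ℝ)+1)) :=
            div_le_div_of_nonneg_right hsum (mul_pos (by linarith) hlogp1).le
        _ = f p / Real.log ((p:ℝ)+1) := by
            rw [mul_div_mul_left _ _ (by linarith : ((p:ℝ)+1) ≠ 0)]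
        _ ≤ f p / Real.log p := div_le_div_of_nonneg_left hfp hlogp
            (Real.log_le_log (by linarith) (by linarith))
    exact liminf_le_liminf hev

private lemma liminf_le_of_sub_tendsto (u v : ℕ → ℝ)
    (h : Tendsto (fun p => u p - v p) atTop (nhds 0)) :
    liminf (fun p => ((v p : ℝ) : EReal)) atTop ≤ liminf (fun p => ((u p : ℝ) : EReal)) atTop := by
  apply ereal_le_of_forall
  intro c hc
  obtain ⟨c', hcc', hc'⟩ := EReal.exists_between_coe_real hc
  have hev1 : ∀ᶠ p in atTop, (c':EReal) < ((v p : ℝ) : EReal) := eventually_lt_of_lt_liminf hc'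
  have hev2 : ∀ᶠ p : ℕ in atTop, -(c' - c) < u p - v p :=
    h.eventually (eventually_gt_nhds (by rw [EReal.coe_lt_coe_iff] at hcc'; linarith))
  have hev : ∀ᶠ p in atTop, (c:EReal) ≤ ((u p : ℝ) : EReal) := by
    filter_upwards [hev1, hev2] with p h1 h2
    rw [EReal.coe_lt_coe_iff] at h1 hcc'
    rw [EReal.coe_le_coe_iff]
    linarith
  exact le_liminf_of_le (by isBoundedDefault) hev

private lemma liminf_eq_of_sub_tendsto (u v : ℕ → ℝ)
    (h : Tendsto (fun p => u p - v p) atTop (nhds 0)) :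
    liminf (fun p => ((u p : ℝ) : EReal)) atTop = liminf (fun p => ((v p : ℝ) : EReal)) atTop := by
  refine le_antisymm (liminf_le_of_sub_tendsto v u ?_) (liminf_le_of_sub_tendsto u v h)
  have := h.neg
  simpa using this

/-- If two weight sequences `M` and `L` are equivalent, then their growth indices coincide:
`ω(M) = ω(L)`, where `ω(M) = liminf_p log (m p) / log p` (computed in `EReal`). -/
theorem stmt9 (M L : ℕ → ℝ)
    (hMpos : ∀ p, 0 < M p) (hM0 : M 0 = 1)
    (hMmono : Monotone fun p => M (p + 1) / M p)
    (hMquot : Tendsto (fun p => M (p + 1) / M p) atTop atTop)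
    (hLpos : ∀ p, 0 < L p) (hL0 : L 0 = 1)
    (hLmono : Monotone fun p => L (p + 1) / L p)
    (hLquot : Tendsto (fun p => L (p + 1) / L p) atTop atTop)
    (A B : ℝ) (hA : 0 < A) (hB : 0 < B)
    (hequiv : ∀ p : ℕ, (B ^ p)⁻¹ * L p ≤ M p ∧ M p ≤ A ^ p * L p) :
    liminf (fun p : ℕ =>
        ((Real.log (M (p + 1) / M p) / Real.log p : ℝ) : EReal)) atTop =
      liminf (fun p : ℕ =>
        ((Real.log (L (p + 1) / L p) / Real.log p : ℝ) : EReal)) atTop := by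
  rw [key M hMpos hM0 hMmono hMquot, key L hLpos hL0 hLmono hLquot]
  apply liminf_eq_of_sub_tendsto
  set C : ℝ := |Real.log A| + |Real.log B| with hC
  have hlogN : Tendsto (fun p : ℕ => Real.log p) atTop atTop :=
    Real.tendsto_log_atTop.comp tendsto_natCast_atTop_atTop
  have hd : ∀ p : ℕ, |Real.log (M p) - Real.log (L p)| ≤ (p:ℝ) * C := by
    intro p
    have hAp : (0:ℝ) < A ^ p := pow_pos hA p
    have hBp : (0:ℝ) < B ^ p := pow_pos hB p
    have h1 : Real.log (M p) ≤ (p:ℝ) * Real.log A + Real.log (L p) := by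
      have := Real.log_le_log (hMpos p) (hequiv p).2
      rwa [Real.log_mul hAp.ne' (hLpos p).ne', Real.log_pow] at this
    have h2 : -((p:ℝ) * Real.log B) + Real.log (L p) ≤ Real.log (M p) := by
      have := Real.log_le_log (mul_pos (inv_pos.2 hBp) (hLpos p)) (hequiv p).1
      rwa [Real.log_mul (inv_pos.2 hBp).ne' (hLpos p).ne', Real.log_inv, Real.log_pow] at this
    rw [abs_le]
    constructor
    · have hBC : Real.log B ≤ C := by
        have := le_abs_self (Real.log B)
        have := abs_nonneg (Real.log A)
        rw [hC]; linarith
      have h3 := mul_le_mul_of_nonneg_left hBC (Nat.cast_nonneg (α := ℝ) p)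
      linarith
    · have hAC : Real.log A ≤ C := by
        have := le_abs_self (Real.log A)
        have := abs_nonneg (Real.log B)
        rw [hC]; linarith
      have h4 := mul_le_mul_of_nonneg_left hAC (Nat.cast_nonneg (α := ℝ) p)
      linarith
  apply squeeze_zero_norm' (a := fun p : ℕ => C / Real.log p)
  · filter_upwards [eventually_ge_atTop 2] with p hp2
    have hp2R : (2:ℝ) ≤ (p:ℝ) := by exact_mod_cast hp2
    have hlogp : 0 < Real.log p := Real.log_pos (by linarith)
    have hpR : (0:ℝ) < p := by linarith
    have hden : (0:ℝ) < (p:ℝ) * Real.log p := mul_pos hpR hlogp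
    have heq : Real.log (M p) / ((p:ℝ) * Real.log p) - Real.log (L p) / ((p:ℝ) * Real.log p)
        = (Real.log (M p) - Real.log (L p)) / ((p:ℝ) * Real.log p) := by ring
    rw [Real.norm_eq_abs, heq, abs_div, abs_of_pos hden]
    calc |Real.log (M p) - Real.log (L p)| / ((p:ℝ) * Real.log p)
        ≤ ((p:ℝ) * C) / ((p:ℝ) * Real.log p) :=
          div_le_div_of_nonneg_right (hd p) hden.le
      _ = C / Real.log p := mul_div_mul_left _ _ hpR.ne'
  · exact tendsto_const_nhds.div_atTop hlogN
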